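/- Suppose (Z, T) is independent of (W, C), β = P(T ≥ W) > 0, and τ0 ≤ t are reals with g(s) > 0 for all s ∈ [τ0, t]. Then for every real m, the weighted estimand identifies the joint distribution of marker and failure time: E[(S(X)/G(X)) · Δ · 1{Z ≤ m} · 1{τ0 ≤ X ≤ t} | T ≥ W] = P(Z ≤ m and τ0 ≤ T ≤ t). -/

import Mathlib

open MeasureTheory ProbabilityTheory
open scoped ENNReal

/-- The set of points where the "survival function of the own value" vanishes is null. -/
lemma null_upper_level {Ω : Type*} [MeasurableSpace Ω] (μ : Measure Ω) [IsProbabilityMeasure μ]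
    (T : Ω → ℝ) :
    μ {ω | μ {ω' | T ω ≤ T ω'} = 0} = 0 := by
  set U : Set ℝ := {s | μ {ω' | s ≤ T ω'} = 0} with hU
  have hup : ∀ s ∈ U, ∀ s', s ≤ s' → s' ∈ U := by
    intro s hs s' hss'
    exact measure_mono_null (fun ω h => le_trans hss' h) hs
  have hsub : {ω | μ {ω' | T ω ≤ T ω'} = 0} ⊆ T ⁻¹' U := fun ω h => h
  by_cases hne : U.Nonempty
  · have hbdd : BddBelow U := by
      by_contra hb
      have hall : ∀ n : ℕ, (-(n : ℝ)) ∈ U := by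
        intro n
        rcases not_bddBelow_iff.mp hb (-(n : ℝ)) with ⟨u, huU, hu⟩
        exact hup u huU _ hu.le
      have hcover : (Set.univ : Set Ω) ⊆ ⋃ n : ℕ, {ω' | (-(n : ℝ)) ≤ T ω'} := by
        intro ω _
        rcases exists_nat_ge (-(T ω)) with ⟨n, hn⟩
        exact Set.mem_iUnion.mpr ⟨n, by simp only [Set.mem_setOf_eq]; linarith⟩
      have : μ (Set.univ : Set Ω) = 0 :=
        measure_mono_null hcover (measure_iUnion_null fun n => hall n)
      simp [measure_univ] at this
    set r := sInf U with hr
    have hgt : ∀ ε : ℝ, 0 < ε → r + ε ∈ U := by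
      intro ε hε
      have : sInf U < r + ε := by linarith [hr.symm]
      rcases (csInf_lt_iff hbdd hne).mp this with ⟨x, hxU, hx⟩
      exact hup x hxU _ hx.le
    have h1 : μ {ω | r < T ω} = 0 := by
      have hcover : {ω | r < T ω} ⊆ ⋃ n : ℕ, {ω' | r + 1 / ((n : ℝ) + 1) ≤ T ω'} := by
        intro ω hω
        rcases exists_nat_one_div_lt (show (0:ℝ) < T ω - r from sub_pos.mpr hω) with ⟨n, hn⟩
        exact Set.mem_iUnion.mpr ⟨n, by simp only [Set.mem_setOf_eq]; linarith⟩
      exact measure_mono_null hcover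
        (measure_iUnion_null fun n => hgt _ (by positivity))
    by_cases hrU : r ∈ U
    · refine measure_mono_null (fun ω h => ?_) hrU
      exact le_trans (csInf_le hbdd (hsub h)) le_rfl
    · refine measure_mono_null (fun ω h => ?_) h1
      have hle : r ≤ T ω := csInf_le hbdd (hsub h)
      rcases lt_or_eq_of_le hle with hlt | heq
      · exact hlt
      · exact absurd (heq ▸ (hsub h)) hrU
  · rw [Set.not_nonempty_iff_eq_empty] at hne
    refine measure_mono_null hsub ?_
    rw [hne]
    simp

/-- Under independence of `(Z, T)` from `(W, C)`, `β = P(T ≥ W) > 0` and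
positivity of `g` on `[τ0, t]`, the weighted estimand identifies the joint distribution
of the marker and the failure time:
`E[(S(X)/G(X)) Δ 1{Z ≤ m} 1{τ0 ≤ X ≤ t} | T ≥ W] = P(Z ≤ m, τ0 ≤ T ≤ t)`. -/
theorem ipw_joint_distribution_identification
    {Ω : Type*} [MeasurableSpace Ω] (μ : Measure Ω) [IsProbabilityMeasure μ]
    (T C W Z : Ω → ℝ) (hT : Measurable T) (hC : Measurable C) (hW : Measurable W)
    (hZmeas : Measurable Z)
    (hindep : IndepFun (fun ω => (Z ω, T ω)) (fun ω => (W ω, C ω)) μ)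
    (S g G : ℝ → ℝ)
    (hS : ∀ t, S t = (μ {ω | t ≤ T ω}).toReal)
    (hg : ∀ t, g t = (μ {ω | W ω ≤ t ∧ t ≤ C ω}).toReal)
    (hβ : 0 < (μ {ω | W ω ≤ T ω}).toReal)
    (hG : ∀ t, G t = ((μ[|{ω | W ω ≤ T ω}]) {ω | t ≤ min (T ω) (C ω) ∧ W ω ≤ t}).toReal)
    (τ0 t : ℝ) (hτ0t : τ0 ≤ t) (hgpos : ∀ s ∈ Set.Icc τ0 t, 0 < g s) (m : ℝ) :
    ∫ ω, (S (min (T ω) (C ω)) / G (min (T ω) (C ω)))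
        * Set.indicator {ω' | T ω' ≤ C ω'} (fun _ => (1 : ℝ)) ω
        * Set.indicator {ω' | Z ω' ≤ m} (fun _ => (1 : ℝ)) ω
        * Set.indicator {ω' | τ0 ≤ min (T ω') (C ω') ∧ min (T ω') (C ω') ≤ t}
            (fun _ => (1 : ℝ)) ω ∂(μ[|{ω | W ω ≤ T ω}])
      = (μ {ω | Z ω ≤ m ∧ τ0 ≤ T ω ∧ T ω ≤ t}).toReal := by
  classical
  set A : Set Ω := {ω | W ω ≤ T ω} with hAdef
  have hAmeas : MeasurableSet A := measurableSet_le hW hT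
  have hAne : μ A ≠ 0 := by
    intro h
    simp [h] at hβ
  have hAtop : μ A ≠ ⊤ := measure_ne_top μ A
  set βR : ℝ := (μ A).toReal with hβR
  have hβRpos : 0 < βR := hβ
  -- measurability and nonnegativity of S
  have hSmeas : Measurable S := by
    have hanti : Antitone S := by
      intro a b hab
      rw [hS a, hS b]
      exact ENNReal.toReal_mono (measure_ne_top μ _)
        (measure_mono fun ω h => le_trans hab h)
    exact hanti.measurable
  have hSnn : ∀ s, 0 ≤ S s := fun s => by rw [hS s]; exact ENNReal.toReal_nonneg
  -- measurability and nonnegativity of g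
  have hgnn : ∀ s, 0 ≤ g s := fun s => by rw [hg s]; exact ENNReal.toReal_nonneg
  have hgmeas : Measurable g := by
    have ha : Monotone (fun s : ℝ => (μ {ω | W ω ≤ s}).toReal) := fun a b hab =>
      ENNReal.toReal_mono (measure_ne_top μ _)
        (measure_mono fun ω h => le_trans h hab)
    have hb : Monotone (fun s : ℝ => (μ {ω | W ω ≤ s ∧ C ω < s}).toReal) := fun a b hab =>
      ENNReal.toReal_mono (measure_ne_top μ _)
        (measure_mono fun ω h => ⟨le_trans h.1 hab, lt_of_lt_of_le h.2 hab⟩)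
    have heq : g = fun s => (μ {ω | W ω ≤ s}).toReal - (μ {ω | W ω ≤ s ∧ C ω < s}).toReal := by
      funext s
      rw [hg s]
      have hmeas2 : MeasurableSet {ω | W ω ≤ s ∧ C ω < s} :=
        (measurableSet_le hW measurable_const).inter (measurableSet_lt hC measurable_const)
      have hsplit : {ω | W ω ≤ s ∧ s ≤ C ω} = {ω | W ω ≤ s} \ {ω | W ω ≤ s ∧ C ω < s} := by
        ext ω
        simp only [Set.mem_setOf_eq, Set.mem_diff, not_and, not_lt]
        constructor
        · rintro ⟨h1, h2⟩; exact ⟨h1, fun _ => h2⟩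
        · rintro ⟨h1, h2⟩; exact ⟨h1, h2 h1⟩
      have hsub2 : {ω | W ω ≤ s ∧ C ω < s} ⊆ {ω | W ω ≤ s} := fun ω h => h.1
      rw [hsplit, measure_diff hsub2 hmeas2.nullMeasurableSet (measure_ne_top μ _),
        ENNReal.toReal_sub_of_le (measure_mono hsub2) (measure_ne_top μ _)]
    rw [heq]
    exact ha.measurable.sub hb.measurable
  -- the key product identity from independence
  have hkey : ∀ s : ℝ, μ {ω | s ≤ T ω ∧ s ≤ C ω ∧ W ω ≤ s}
      = μ {ω | s ≤ T ω} * μ {ω | W ω ≤ s ∧ s ≤ C ω} := by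
    intro s
    have hms1 : MeasurableSet {p : ℝ × ℝ | s ≤ p.2} :=
      measurableSet_le measurable_const measurable_snd
    have hms2 : MeasurableSet {q : ℝ × ℝ | q.1 ≤ s ∧ s ≤ q.2} :=
      (measurableSet_le measurable_fst measurable_const).inter
        (measurableSet_le measurable_const measurable_snd)
    have h1 : {ω | s ≤ T ω ∧ s ≤ C ω ∧ W ω ≤ s}
        = (fun ω => (Z ω, T ω)) ⁻¹' {p : ℝ × ℝ | s ≤ p.2}
          ∩ (fun ω => (W ω, C ω)) ⁻¹' {q : ℝ × ℝ | q.1 ≤ s ∧ s ≤ q.2} := by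
      ext ω
      simp only [Set.mem_setOf_eq, Set.mem_inter_iff, Set.mem_preimage]
      tauto
    rw [h1, hindep.measure_inter_preimage_eq_mul _ _ hms1 hms2]
    rfl
  -- the formula for G
  have hGform : ∀ s : ℝ, G s = S s * g s / βR := by
    intro s
    rw [hG s, cond_apply hAmeas]
    have hABeq : A ∩ {ω | s ≤ min (T ω) (C ω) ∧ W ω ≤ s}
        = {ω | s ≤ T ω ∧ s ≤ C ω ∧ W ω ≤ s} := by
      ext ω
      simp only [hAdef, Set.mem_inter_iff, Set.mem_setOf_eq, le_min_iff]
      constructor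
      · rintro ⟨_, ⟨h1, h2⟩, h3⟩; exact ⟨h1, h2, h3⟩
      · rintro ⟨h1, h2, h3⟩; exact ⟨le_trans h3 h1, ⟨h1, h2⟩, h3⟩
    rw [hABeq, hkey s, ENNReal.toReal_mul, ENNReal.toReal_mul, ENNReal.toReal_inv,
      ← hS s, ← hg s, ← hβR]
    ring
  have hGmeas : Measurable G := by
    have : G = fun s => S s * g s / βR := funext hGform
    rw [this]
    exact ((hSmeas.mul hgmeas).div_const βR)
  have hGnn : ∀ s, 0 ≤ G s := fun s => by
    rw [hGform s]
    exact div_nonneg (mul_nonneg (hSnn s) (hgnn s)) hβRpos.le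
  -- abbreviations for the two random vectors
  set ξ : Ω → ℝ × ℝ := fun ω => (Z ω, T ω) with hξdef
  set η : Ω → ℝ × ℝ := fun ω => (W ω, C ω) with hηdef
  have hξm : Measurable ξ := hZmeas.prodMk hT
  have hηm : Measurable η := hW.prodMk hC
  set κ : Measure (ℝ × ℝ) := μ.map ξ with hκdef
  set lam : Measure (ℝ × ℝ) := μ.map η with hlamdef
  have hprod : μ.map (fun ω => (ξ ω, η ω)) = κ.prod lam :=
    (indepFun_iff_map_prod_eq_prod_map_map hξm.aemeasurable hηm.aemeasurable).mp hindep
  haveI : IsProbabilityMeasure κ := Measure.isProbabilityMeasure_map hξm.aemeasurable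
  haveI : IsProbabilityMeasure lam := Measure.isProbabilityMeasure_map hηm.aemeasurable
  -- the deterministic weight function
  set h : ℝ × ℝ → ℝ := fun p => (S p.2 / G p.2) * (if p.1 ≤ m then 1 else 0)
    * (if τ0 ≤ p.2 ∧ p.2 ≤ t then 1 else 0) with hhdef
  have hhnn : ∀ p, 0 ≤ h p := by
    intro p
    rw [hhdef]
    have := div_nonneg (hSnn p.2) (hGnn p.2)
    positivity
  have hhmeas : Measurable h := by
    rw [hhdef]
    refine (((hSmeas.comp measurable_snd).div (hGmeas.comp measurable_snd)).mul
      (Measurable.ite (measurableSet_le measurable_fst measurable_const)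
        measurable_const measurable_const)).mul
      (Measurable.ite ?_ measurable_const measurable_const)
    exact (measurableSet_le measurable_const measurable_snd).inter
      (measurableSet_le measurable_snd measurable_const)
  -- the product-space integrand
  set F : (ℝ × ℝ) × (ℝ × ℝ) → ℝ := fun pq =>
    h pq.1 * (if pq.2.1 ≤ pq.1.2 ∧ pq.1.2 ≤ pq.2.2 then 1 else 0) with hFdef
  have hFmeas : Measurable fun pq => ENNReal.ofReal (F pq) := by
    refine ENNReal.measurable_ofReal.comp ?_
    rw [hFdef]
    refine (hhmeas.comp measurable_fst).mul
      (Measurable.ite ?_ measurable_const measurable_const)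
    exact (measurableSet_le (measurable_snd.fst) (measurable_fst.snd)).inter
      (measurableSet_le (measurable_fst.snd) (measurable_snd.snd))
  -- the original integrand
  set f0 : Ω → ℝ := fun ω => (S (min (T ω) (C ω)) / G (min (T ω) (C ω)))
      * Set.indicator {ω' | T ω' ≤ C ω'} (fun _ => (1 : ℝ)) ω
      * Set.indicator {ω' | Z ω' ≤ m} (fun _ => (1 : ℝ)) ω
      * Set.indicator {ω' | τ0 ≤ min (T ω') (C ω') ∧ min (T ω') (C ω') ≤ t}
          (fun _ => (1 : ℝ)) ω with hf0def
  have hf0nn : ∀ ω, 0 ≤ f0 ω := by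
    intro ω
    rw [hf0def]
    have h1 := div_nonneg (hSnn (min (T ω) (C ω))) (hGnn (min (T ω) (C ω)))
    have h2 : (0:ℝ) ≤ Set.indicator {ω' | T ω' ≤ C ω'} (fun _ => (1 : ℝ)) ω :=
      Set.indicator_nonneg (fun _ _ => zero_le_one) ω
    have h3 : (0:ℝ) ≤ Set.indicator {ω' | Z ω' ≤ m} (fun _ => (1 : ℝ)) ω :=
      Set.indicator_nonneg (fun _ _ => zero_le_one) ω
    have h4 : (0:ℝ) ≤ Set.indicator {ω' | τ0 ≤ min (T ω') (C ω') ∧ min (T ω') (C ω') ≤ t}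
        (fun _ => (1 : ℝ)) ω := Set.indicator_nonneg (fun _ _ => zero_le_one) ω
    positivity
  have hf0meas : Measurable f0 := by
    rw [hf0def]
    have hmin : Measurable fun ω => min (T ω) (C ω) := hT.min hC
    refine ((((hSmeas.comp hmin).div (hGmeas.comp hmin)).mul
      (measurable_const.indicator (measurableSet_le hT hC))).mul
      (measurable_const.indicator (measurableSet_le hZmeas measurable_const))).mul
      (measurable_const.indicator ?_)
    exact (measurableSet_le measurable_const hmin).inter (measurableSet_le hmin measurable_const)
  -- pointwise identification on the restricted measure
  have hpoint : ∀ ω, A.indicator (fun ω' => ENNReal.ofReal (f0 ω')) ω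
      = ENNReal.ofReal (F (ξ ω, η ω)) := by
    intro ω
    by_cases hAω : ω ∈ A
    · rw [Set.indicator_of_mem hAω]
      congr 1
      have hWT : W ω ≤ T ω := hAω
      by_cases hTC : T ω ≤ C ω
      · have hminT : min (T ω) (C ω) = T ω := min_eq_left hTC
        rw [hf0def, hFdef, hhdef]
        simp only [hminT, Set.indicator_apply, Set.mem_setOf_eq, hξdef, hηdef]
        rw [if_pos hTC, if_pos (show W ω ≤ T ω ∧ T ω ≤ C ω from ⟨hWT, hTC⟩)]
        ring
      · rw [hf0def, hFdef]
        simp only [Set.indicator_apply, Set.mem_setOf_eq, hξdef, hηdef]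
        rw [if_neg hTC, if_neg (show ¬(W ω ≤ T ω ∧ T ω ≤ C ω) from fun hc => hTC hc.2)]
        ring
    · rw [Set.indicator_of_notMem hAω, hFdef]
      have : ¬ (W ω ≤ T ω) := hAω
      simp only [hξdef, hηdef]
      rw [if_neg (show ¬(W ω ≤ T ω ∧ T ω ≤ C ω) from fun hc => this hc.1), mul_zero,
        ENNReal.ofReal_zero]
  -- inner integral over lam
  have hinner : ∀ p : ℝ × ℝ, ∫⁻ q, ENNReal.ofReal (F (p, q)) ∂lam
      = ENNReal.ofReal (h p) * ENNReal.ofReal (g p.2) := by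
    intro p
    have hSp : MeasurableSet {q : ℝ × ℝ | q.1 ≤ p.2 ∧ p.2 ≤ q.2} :=
      (measurableSet_le measurable_fst measurable_const).inter
        (measurableSet_le measurable_const measurable_snd)
    have hpt : ∀ q : ℝ × ℝ, ENNReal.ofReal (F (p, q))
        = Set.indicator {q : ℝ × ℝ | q.1 ≤ p.2 ∧ p.2 ≤ q.2}
            (fun _ => ENNReal.ofReal (h p)) q := by
      intro q
      by_cases hq : q.1 ≤ p.2 ∧ p.2 ≤ q.2
      · rw [Set.indicator_of_mem (show q ∈ {q : ℝ × ℝ | q.1 ≤ p.2 ∧ p.2 ≤ q.2} from hq)]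
        simp only [hFdef]
        rw [if_pos hq, mul_one]
      · rw [Set.indicator_of_notMem (show q ∉ {q : ℝ × ℝ | q.1 ≤ p.2 ∧ p.2 ≤ q.2} from hq)]
        simp only [hFdef]
        rw [if_neg hq, mul_zero, ENNReal.ofReal_zero]
    calc ∫⁻ q, ENNReal.ofReal (F (p, q)) ∂lam
        = ∫⁻ q, Set.indicator {q : ℝ × ℝ | q.1 ≤ p.2 ∧ p.2 ≤ q.2}
            (fun _ => ENNReal.ofReal (h p)) q ∂lam := by
          exact lintegral_congr hpt
      _ = ENNReal.ofReal (h p) * lam {q : ℝ × ℝ | q.1 ≤ p.2 ∧ p.2 ≤ q.2} := by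
          rw [lintegral_indicator hSp, setLIntegral_const]
      _ = ENNReal.ofReal (h p) * ENNReal.ofReal (g p.2) := by
          congr 1
          rw [hlamdef, Measure.map_apply hηm hSp]
          have : η ⁻¹' {q : ℝ × ℝ | q.1 ≤ p.2 ∧ p.2 ≤ q.2}
              = {ω | W ω ≤ p.2 ∧ p.2 ≤ C ω} := rfl
          rw [this, hg p.2, ENNReal.ofReal_toReal (measure_ne_top μ _)]
  -- pointwise simplification on κ
  set D : Set (ℝ × ℝ) := {p | (p.1 ≤ m ∧ (τ0 ≤ p.2 ∧ p.2 ≤ t)) ∧ S p.2 ≠ 0} with hDdef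
  have hDmeas : MeasurableSet D := by
    refine (((measurableSet_le measurable_fst measurable_const).inter
      ((measurableSet_le measurable_const measurable_snd).inter
        (measurableSet_le measurable_snd measurable_const))).inter ?_)
    exact ((hSmeas.comp measurable_snd) (measurableSet_singleton 0)).compl
  have hsimp : ∀ p : ℝ × ℝ, ENNReal.ofReal (h p) * ENNReal.ofReal (g p.2)
      = ENNReal.ofReal βR * D.indicator (fun _ => (1 : ℝ≥0∞)) p := by
    intro p
    by_cases h2 : τ0 ≤ p.2 ∧ p.2 ≤ t
    · have hgp : 0 < g p.2 := hgpos p.2 ⟨h2.1, h2.2⟩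
      by_cases h3 : S p.2 = 0
      · have hh0 : h p = 0 := by
          simp only [hhdef]
          rw [hGform p.2, h3]
          simp
        have hpD : p ∉ D := by
          rw [hDdef]
          simp only [Set.mem_setOf_eq, not_and]
          intro hc
          simpa using h3
        rw [hh0, Set.indicator_of_notMem hpD]
        simp
      · by_cases h1 : p.1 ≤ m
        · have hpD : p ∈ D := ⟨⟨h1, h2⟩, h3⟩
          have hhg : h p * g p.2 = βR := by
            simp only [hhdef]
            rw [if_pos h1, if_pos h2, hGform p.2]
            field_simp
          rw [← ENNReal.ofReal_mul (hhnn p), hhg, Set.indicator_of_mem hpD, mul_one]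
        · have hh0 : h p = 0 := by
            simp only [hhdef]
            rw [if_neg h1]
            ring
          have hpD : p ∉ D := by
            rw [hDdef]
            simp only [Set.mem_setOf_eq, not_and]
            intro hc
            exact absurd hc.1 h1
          rw [hh0, Set.indicator_of_notMem hpD]
          simp
    · have hh0 : h p = 0 := by
        simp only [hhdef]
        rw [if_neg h2]
        ring
      have hpD : p ∉ D := by
        rw [hDdef]
        simp only [Set.mem_setOf_eq, not_and]
        intro hc
        exact absurd hc.2 h2
      rw [hh0, Set.indicator_of_notMem hpD]
      simp
  -- κ D equals the target measure
  have hκD : κ D = μ {ω | Z ω ≤ m ∧ τ0 ≤ T ω ∧ T ω ≤ t} := by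
    rw [hκdef, Measure.map_apply hξm hDmeas]
    set Btgt : Set Ω := {ω | Z ω ≤ m ∧ τ0 ≤ T ω ∧ T ω ≤ t} with hBdef
    set N : Set Ω := {ω | S (T ω) = 0} with hNdef
    have hNnull : μ N = 0 := by
      have hNeq : N = {ω | μ {ω' | T ω ≤ T ω'} = 0} := by
        ext ω
        simp only [hNdef, Set.mem_setOf_eq, hS (T ω)]
        rw [ENNReal.toReal_eq_zero_iff]
        constructor
        · rintro (h | h)
          · exact h
          · exact absurd h (measure_ne_top μ _)
        · intro h; exact Or.inl h
      rw [hNeq]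
      exact null_upper_level μ T
    have hpre : ξ ⁻¹' D = Btgt \ N := by
      ext ω
      simp only [hDdef, hBdef, hNdef, Set.mem_preimage, Set.mem_setOf_eq, Set.mem_diff,
        hξdef]
    rw [hpre, measure_diff_null hNnull]
  -- nonnegativity and measurability for the Bochner → Lebesgue conversion
  have hnn_ae : 0 ≤ᵐ[μ[|A]] f0 := Filter.Eventually.of_forall hf0nn
  have hmeas_ae : AEStronglyMeasurable f0 (μ[|A]) := hf0meas.aestronglyMeasurable
  -- the main lintegral computation
  have hmain : ∫⁻ ω, ENNReal.ofReal (f0 ω) ∂(μ[|A])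
      = μ {ω | Z ω ≤ m ∧ τ0 ≤ T ω ∧ T ω ≤ t} := by
    calc ∫⁻ ω, ENNReal.ofReal (f0 ω) ∂(μ[|A])
        = (μ A)⁻¹ * ∫⁻ ω, ENNReal.ofReal (f0 ω) ∂(μ.restrict A) := by
          rw [ProbabilityTheory.cond, lintegral_smul_measure, smul_eq_mul]
      _ = (μ A)⁻¹ * ∫⁻ ω, A.indicator (fun ω' => ENNReal.ofReal (f0 ω')) ω ∂μ := by
          rw [lintegral_indicator hAmeas]
      _ = (μ A)⁻¹ * ∫⁻ ω, ENNReal.ofReal (F (ξ ω, η ω)) ∂μ := by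
          rw [lintegral_congr hpoint]
      _ = (μ A)⁻¹ * ∫⁻ pq, ENNReal.ofReal (F pq) ∂(κ.prod lam) := by
          rw [← hprod, lintegral_map hFmeas (hξm.prodMk hηm)]
      _ = (μ A)⁻¹ * ∫⁻ p, ∫⁻ q, ENNReal.ofReal (F (p, q)) ∂lam ∂κ := by
          rw [lintegral_prod _ hFmeas.aemeasurable]
      _ = (μ A)⁻¹ * ∫⁻ p, ENNReal.ofReal βR * D.indicator (fun _ => (1 : ℝ≥0∞)) p ∂κ := by
          congr 1
          refine lintegral_congr fun p => ?_
          rw [hinner p, hsimp p]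
      _ = (μ A)⁻¹ * (ENNReal.ofReal βR * κ D) := by
          have hmeasind : Measurable fun p => D.indicator (fun _ => (1 : ℝ≥0∞)) p :=
            measurable_const.indicator hDmeas
          rw [lintegral_const_mul _ hmeasind]
          congr 1
          rw [lintegral_indicator hDmeas, setLIntegral_const, one_mul]
      _ = μ {ω | Z ω ≤ m ∧ τ0 ≤ T ω ∧ T ω ≤ t} := by
          rw [hκD, hβR, ENNReal.ofReal_toReal hAtop, ← mul_assoc,
            ENNReal.inv_mul_cancel hAne hAtop, one_mul]
  -- conclusion
  have hconv := integral_eq_lintegral_of_nonneg_ae hnn_ae hmeas_ae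
  calc ∫ ω, (S (min (T ω) (C ω)) / G (min (T ω) (C ω)))
        * Set.indicator {ω' | T ω' ≤ C ω'} (fun _ => (1 : ℝ)) ω
        * Set.indicator {ω' | Z ω' ≤ m} (fun _ => (1 : ℝ)) ω
        * Set.indicator {ω' | τ0 ≤ min (T ω') (C ω') ∧ min (T ω') (C ω') ≤ t}
            (fun _ => (1 : ℝ)) ω ∂(μ[|A])
      = ∫ ω, f0 ω ∂(μ[|A]) := by rw [hf0def]
    _ = (∫⁻ ω, ENNReal.ofReal (f0 ω) ∂(μ[|A])).toReal := hconv
    _ = (μ {ω | Z ω ≤ m ∧ τ0 ≤ T ω ∧ T ω ≤ t}).toReal := by rw [hmain]
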